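/- Let K be a nontrivial semiring (0 ≠ 1), n ≥ 1, and M_1,…,M_k ∈ K^{n×n}. Define (n+1)×(n+1) matrices over K: for 1 ≤ i ≤ k, A_i has entry 1 in the top-left corner, the block M_i in the bottom-right n×n block, and zeros elsewhere in the first row and first column; A_0 has entry 1 in the top-left corner, zeros in the rest of the first row, all entries 1 in the rest of the first column, and the n×n identity matrix in the bottom-right block. Then the following are equivalent: (i) the n×n zero matrix belongs to the submonoid of K^{n×n} generated by {M_1,…,M_k}; (ii) the set {A_0, A_1,…,A_k} is synchronizable; (iii) the set {A_0, A_1,…,A_k} is location synchronizable. -/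

import Mathlib

/-- A matrix is *location synchronizing* if there is a column index `i` such that an entry
`A j k` is nonzero exactly when `k = i`. -/
def IsLocSync {K : Type*} [Semiring K] {ι : Type*} (A : Matrix ι ι K) : Prop :=
  ∃ i, ∀ j k, A j k ≠ 0 ↔ k = i

/-- A matrix is *synchronizing* if it is location synchronizing and all entries of the
designated column coincide. -/
def IsSync {K : Type*} [Semiring K] {ι : Type*} (A : Matrix ι ι K) : Prop :=
  ∃ i, (∀ j k, A j k ≠ 0 ↔ k = i) ∧ (∀ j j', A j i = A j' i)

/-- A set of matrices is *synchronizable* if some nonempty finite product of its elements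
(with repetitions allowed) is synchronizing. -/
def IsSynchronizable {K : Type*} [Semiring K] {ι : Type*} [Fintype ι] [DecidableEq ι]
    (S : Set (Matrix ι ι K)) : Prop :=
  ∃ l : List (Matrix ι ι K), l ≠ [] ∧ (∀ A ∈ l, A ∈ S) ∧ IsSync l.prod

/-- A set of matrices is *location synchronizable* if some nonempty finite product of its
elements (with repetitions allowed) is location synchronizing. -/
def IsLocSynchronizable {K : Type*} [Semiring K] {ι : Type*} [Fintype ι] [DecidableEq ι]
    (S : Set (Matrix ι ι K)) : Prop :=
  ∃ l : List (Matrix ι ι K), l ≠ [] ∧ (∀ A ∈ l, A ∈ S) ∧ IsLocSync l.prod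

/-- `A_i`: entry `1` in the top-left corner, the block `M` in the bottom-right `n × n`
block, zeros elsewhere in the first row and first column. -/
def liftMat {K : Type*} [Semiring K] {n : ℕ} (M : Matrix (Fin n) (Fin n) K) :
    Matrix (Fin 1 ⊕ Fin n) (Fin 1 ⊕ Fin n) K :=
  Matrix.fromBlocks 1 0 0 M

/-- `A_0`: entry `1` in the top-left corner, zeros in the rest of the first row, all
entries `1` in the rest of the first column, and the identity in the bottom-right block. -/
def resetMat (K : Type*) [Semiring K] (n : ℕ) :
    Matrix (Fin 1 ⊕ Fin n) (Fin 1 ⊕ Fin n) K :=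
  Matrix.fromBlocks 1 0 (Matrix.of fun _ _ => 1) 1


private lemma prod_blockTri {K : Type*} [Semiring K] {n : ℕ}
    (l : List (Matrix (Fin 1 ⊕ Fin n) (Fin 1 ⊕ Fin n) K))
    (h : ∀ A ∈ l, ∃ c d, A = Matrix.fromBlocks 1 0 c d) :
    ∃ c, l.prod = Matrix.fromBlocks 1 0 c (l.map Matrix.toBlocks₂₂).prod := by
  induction l with
  | nil => exact ⟨0, by simp [Matrix.fromBlocks_one]⟩
  | cons A l ih =>
    obtain ⟨c, d, rfl⟩ := h A List.mem_cons_self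
    obtain ⟨c', hc'⟩ := ih (fun B hB => h B (List.mem_cons_of_mem _ hB))
    refine ⟨c + d * c', ?_⟩
    simp [hc', Matrix.fromBlocks_multiply, Matrix.toBlocks_fromBlocks₂₂]

private lemma liftMat_prod {K : Type*} [Semiring K] {n : ℕ}
    (l : List (Matrix (Fin n) (Fin n) K)) :
    (l.map liftMat).prod = liftMat l.prod := by
  induction l with
  | nil => simp [liftMat, Matrix.fromBlocks_one]
  | cons A l ih => simp [liftMat, ih, Matrix.fromBlocks_multiply]

/-- Over a nontrivial semiring `K`, the following are equivalent: (i) the zero matrix is a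
product of the `M i`; (ii) `{A_0, A_1, …, A_k}` is synchronizable; (iii) `{A_0, A_1, …, A_k}`
is location synchronizable. -/
theorem mortality_iff_sync_iff_locSync {K : Type*} [Semiring K] (hK : (0 : K) ≠ 1)
    {n k : ℕ} (hn : 1 ≤ n) (M : Fin k → Matrix (Fin n) (Fin n) K) :
    ((0 : Matrix (Fin n) (Fin n) K) ∈ Submonoid.closure (Set.range M) ↔
        IsSynchronizable (insert (resetMat K n) (Set.range fun i => liftMat (M i)))) ∧
      (IsSynchronizable (insert (resetMat K n) (Set.range fun i => liftMat (M i))) ↔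
        IsLocSynchronizable (insert (resetMat K n) (Set.range fun i => liftMat (M i)))) := by

  have h1 : (1 : K) ≠ 0 := fun h => hK h.symm
  set S := insert (resetMat K n) (Set.range fun i => liftMat (M i)) with hS
  -- (i) → (ii)
  have h12 : (0 : Matrix (Fin n) (Fin n) K) ∈ Submonoid.closure (Set.range M) →
      IsSynchronizable S := by
    intro h0
    obtain ⟨l, hl, hprod⟩ := Submonoid.exists_list_of_mem_closure h0
    refine ⟨resetMat K n :: l.map liftMat, by simp, ?_, ?_⟩
    · intro A hA
      rcases List.mem_cons.mp hA with rfl | hA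
      · exact Set.mem_insert _ _
      · obtain ⟨B, hB, rfl⟩ := List.mem_map.mp hA
        obtain ⟨i, rfl⟩ := hl B hB
        exact Set.mem_insert_of_mem _ ⟨i, rfl⟩
    · have hP : (resetMat K n :: l.map liftMat).prod
          = Matrix.fromBlocks 1 0 (Matrix.of fun _ _ => (1 : K)) 0 := by
        rw [List.prod_cons, liftMat_prod, hprod]
        simp [resetMat, liftMat, Matrix.fromBlocks_multiply]
      refine ⟨Sum.inl 0, ?_, ?_⟩
      · rintro (j | j) (kk | kk) <;>
          simp [hP, Matrix.fromBlocks_apply₁₁, Matrix.fromBlocks_apply₁₂,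
            Matrix.fromBlocks_apply₂₁, Matrix.fromBlocks_apply₂₂,
            Matrix.one_apply, Fin.eq_zero, h1]
      · rintro (j | j) (j' | j') <;>
          simp [hP, Matrix.fromBlocks_apply₁₁, Matrix.fromBlocks_apply₂₁,
            Matrix.one_apply, Fin.eq_zero]
  -- (iii) → (i)
  have h31 : IsLocSynchronizable S →
      (0 : Matrix (Fin n) (Fin n) K) ∈ Submonoid.closure (Set.range M) := by
    rintro ⟨l, hne, hmem, i, hi⟩
    have hform : ∀ A ∈ l, ∃ c d, A = Matrix.fromBlocks 1 0 c d := by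
      intro A hA
      rcases hmem A hA with rfl | ⟨j, rfl⟩
      · exact ⟨_, _, rfl⟩
      · exact ⟨_, _, rfl⟩
    obtain ⟨c, hc⟩ := prod_blockTri l hform
    have hDmem : (l.map Matrix.toBlocks₂₂).prod ∈ Submonoid.closure (Set.range M) := by
      refine Submonoid.list_prod_mem _ ?_
      intro B hB
      obtain ⟨A, hA, rfl⟩ := List.mem_map.mp hB
      rcases hmem A hA with rfl | ⟨j, rfl⟩
      · have : Matrix.toBlocks₂₂ (resetMat K n) = (1 : Matrix (Fin n) (Fin n) K) :=
          Matrix.toBlocks_fromBlocks₂₂ _ _ _ _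
        rw [this]; exact one_mem _
      · have : Matrix.toBlocks₂₂ (liftMat (M j)) = M j :=
          Matrix.toBlocks_fromBlocks₂₂ _ _ _ _
        rw [this]; exact Submonoid.subset_closure ⟨j, rfl⟩
    have hi0 : i = Sum.inl 0 := by
      have h11 : l.prod (Sum.inl 0) (Sum.inl 0) ≠ 0 := by
        rw [hc]
        simpa [Matrix.fromBlocks_apply₁₁, Matrix.one_apply] using h1
      exact ((hi (Sum.inl 0) (Sum.inl 0)).mp h11).symm
    have hD0 : (l.map Matrix.toBlocks₂₂).prod = 0 := by
      ext a b
      have := (hi (Sum.inr a) (Sum.inr b))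
      rw [hi0] at this
      have hz : l.prod (Sum.inr a) (Sum.inr b) = 0 := by
        by_contra hnz
        exact Sum.inr_ne_inl (this.mp hnz)
      rw [hc] at hz
      simpa [Matrix.fromBlocks_apply₂₂] using hz
    rw [hD0] at hDmem
    exact hDmem
  have h23 : IsSynchronizable S → IsLocSynchronizable S := by
    rintro ⟨l, hne, hmem, i, hi, -⟩
    exact ⟨l, hne, hmem, i, hi⟩
  exact ⟨⟨h12, fun h => h31 (h23 h)⟩, ⟨h23, fun h => h12 (h31 h)⟩⟩
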